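/- arXiv:1409.3642 — 3 statements merged into one kernel-verified Lean document; each statement's English description precedes it below -/
import Mathlib

section
/- Let $\zeta_1,\dots,\zeta_n$ be independent non-negative random variables with $E\zeta_i^p < \infty$ for some $1 < p \le 2$. Then for any $0 < y < \sum_{i=1}^n E\zeta_i$, one has $P\big(\sum_{i=1}^n \zeta_i \le \sum_{i=1}^n E\zeta_i - y\big) \le \exp\Big(-\frac{p-1}{4}\cdot \frac{y^{p/(p-1)}}{(\sum_{i=1}^n E\zeta_i^p)^{1/(p-1)}}\Big)$. -/
open MeasureTheory ProbabilityTheory Real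

lemma aux_exp_le {p : ℝ} (hp1 : 1 ≤ p) (hp2 : p ≤ 2) {u : ℝ} (hu : 0 ≤ u) :
    Real.exp (-u) ≤ 1 - u + u ^ p := by
  rcases eq_or_lt_of_le hu with h0 | h0
  · simp [← h0, Real.zero_rpow (by linarith : p ≠ 0)]
  rcases le_or_gt u 1 with h1 | h1
  · have h2 : u ^ (2:ℝ) ≤ u ^ p := Real.rpow_le_rpow_of_exponent_ge h0 h1 hp2
    have key : Real.exp (-u) ≤ 1 - u + u ^ (2:ℝ) := by
      have hexp : u + 1 ≤ Real.exp u := Real.add_one_le_exp u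
      have h3 : Real.exp (-u) ≤ 1 / (1 + u) := by
        rw [Real.exp_neg, one_div]
        gcongr
        linarith
      have h4 : 1 / (1 + u) ≤ 1 - u + u ^ (2:ℝ) := by
        rw [div_le_iff₀ (by linarith)]
        have h5 : u ^ (2:ℝ) = u * u := by
          rw [show (2:ℝ) = (2:ℕ) by norm_num, Real.rpow_natCast]; ring
        rw [h5]
        nlinarith [mul_nonneg (mul_nonneg hu hu) hu]
      linarith
    linarith
  · have h2 : u ^ (1:ℝ) ≤ u ^ p := Real.rpow_le_rpow_of_exponent_le h1.le hp1
    rw [Real.rpow_one] at h2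
    have : Real.exp (-u) ≤ 1 := by
      rw [Real.exp_le_one_iff]; linarith
    linarith

lemma aux_p_rpow_le_four {p : ℝ} (hp1 : 1 < p) (hp2 : p ≤ 2) :
    p ^ (p / (p - 1)) ≤ 4 := by
  have hp0 : (0:ℝ) < p := by linarith
  have hcv := Real.convexOn_mul_log.2 (by norm_num : (1:ℝ) ∈ Set.Ici (0:ℝ))
    (by norm_num : (2:ℝ) ∈ Set.Ici (0:ℝ)) (by linarith : (0:ℝ) ≤ 2 - p)
    (by linarith : (0:ℝ) ≤ p - 1) (by ring)
  simp only [smul_eq_mul, Real.log_one, mul_one, mul_zero, zero_add] at hcv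
  have he : 2 - p + (p - 1) * 2 = p := by ring
  rw [he] at hcv
  rw [Real.rpow_def_of_pos hp0]
  have h4 : (4:ℝ) = Real.exp (2 * Real.log 2) := by
    rw [← Real.exp_log (by norm_num : (0:ℝ) < 4)]
    congr 1
    rw [show (4:ℝ) = 2 ^ (2:ℕ) by norm_num, Real.log_pow]; norm_num
  rw [h4, Real.exp_le_exp]
  have h6 : Real.log p * (p / (p - 1)) = (p * Real.log p) / (p - 1) := by
    field_simp
  rw [h6, div_le_iff₀ (by linarith : (0:ℝ) < p - 1)]
  linarith

/-- Lower-tail inequality for sums of independent non-negative random variables: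
if `ζ₁,…,ζₙ` are independent, non-negative, with finite `p`-th moments for some
`1 < p ≤ 2`, then for any `0 < y < ∑ E ζᵢ`,
`P(∑ ζᵢ ≤ ∑ E ζᵢ - y) ≤ exp(-((p-1)/4) · y^{p/(p-1)} / (∑ E ζᵢ^p)^{1/(p-1)})`. -/
theorem lower_tail_independent_nonneg
    {Ω : Type*} [MeasurableSpace Ω] (μ : Measure Ω) [IsProbabilityMeasure μ]
    (n : ℕ) (ζ : Fin n → Ω → ℝ) (p : ℝ) (hp1 : 1 < p) (hp2 : p ≤ 2)
    (hmeas : ∀ i, Measurable (ζ i))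
    (hindep : iIndepFun ζ μ)
    (hnonneg : ∀ i, 0 ≤ᵐ[μ] ζ i)
    (hmom : ∀ i, MemLp (ζ i) (ENNReal.ofReal p) μ)
    (y : ℝ) (hy0 : 0 < y) (hy : y < ∑ i, ∫ ω, ζ i ω ∂μ) :
    (μ {ω | ∑ i, ζ i ω ≤ (∑ i, ∫ ω', ζ i ω' ∂μ) - y}).toReal ≤
      Real.exp (-((p - 1) / 4) *
        (y ^ (p / (p - 1)) / (∑ i, ∫ ω, ζ i ω ^ p ∂μ) ^ (1 / (p - 1)))) := by
  have hq0 : (0:ℝ) < p - 1 := by linarith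
  have hpp : (0:ℝ) < p := by linarith
  set A := ∑ i, ∫ ω, ζ i ω ∂μ with hA
  set B := ∑ i, ∫ ω, ζ i ω ^ p ∂μ with hB
  -- integrability
  have hζint : ∀ i, Integrable (ζ i) μ := fun i =>
    (hmom i).integrable (by
      rw [← ENNReal.ofReal_one]
      exact ENNReal.ofReal_le_ofReal (by linarith))
  have hζpint : ∀ i, Integrable (fun ω => ζ i ω ^ p) μ := by
    intro i
    have h := (hmom i).integrable_norm_rpow (ENNReal.ofReal_pos.mpr hpp).ne'
      ENNReal.ofReal_ne_top
    rw [ENNReal.toReal_ofReal hpp.le] at h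
    refine h.congr ?_
    filter_upwards [hnonneg i] with ω hω
    rw [Real.norm_of_nonneg hω]
  have hEp_nonneg : ∀ i, 0 ≤ ∫ ω, ζ i ω ^ p ∂μ := by
    intro i
    refine integral_nonneg_of_ae ?_
    filter_upwards [hnonneg i] with ω hω
    exact Real.rpow_nonneg hω p
  -- positivity of B
  have hBpos : 0 < B := by
    rcases (Finset.sum_nonneg fun i _ => hEp_nonneg i : (0:ℝ) ≤ B).lt_or_eq with h | h
    · exact h
    exfalso
    have hall := (Finset.sum_eq_zero_iff_of_nonneg fun i _ => hEp_nonneg i).mp h.symm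
    have hA0 : A = 0 := by
      refine Finset.sum_eq_zero fun i _ => ?_
      have hz : (fun ω => ζ i ω ^ p) =ᵐ[μ] 0 := by
        refine (integral_eq_zero_iff_of_nonneg_ae ?_ (hζpint i)).mp
          (hall i (Finset.mem_univ i)) |>.mono fun ω hω => hω
        filter_upwards [hnonneg i] with ω hω
        exact Real.rpow_nonneg hω p
      have hz2 : ζ i =ᵐ[μ] 0 := by
        filter_upwards [hz, hnonneg i] with ω hω hω2
        have : ζ i ω ^ p = 0 := hω
        simpa using (Real.rpow_eq_zero hω2 (by linarith : p ≠ 0)).mp this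
      rw [integral_congr_ae hz2]; simp
    rw [hA0] at hy
    linarith
  -- the Chernoff parameter
  set lam : ℝ := (y / (p * B)) ^ (1 / (p - 1)) with hlam_def
  have hx0 : 0 < y / (p * B) := div_pos hy0 (mul_pos hpp hBpos)
  have hlam : 0 < lam := Real.rpow_pos_of_pos hx0 _
  -- per-variable mgf bound
  have hmgf : ∀ i, mgf (ζ i) μ (-lam) ≤
      Real.exp (-(lam * ∫ ω, ζ i ω ∂μ) + lam ^ p * ∫ ω, ζ i ω ^ p ∂μ) := by
    intro i
    have hint : Integrable (fun ω => 1 - lam * ζ i ω + lam ^ p * ζ i ω ^ p) μ :=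
      ((integrable_const 1).sub ((hζint i).const_mul lam)).add
        ((hζpint i).const_mul (lam ^ p))
    have step1 : mgf (ζ i) μ (-lam) ≤
        ∫ ω, (1 - lam * ζ i ω + lam ^ p * ζ i ω ^ p) ∂μ := by
      refine integral_mono_of_nonneg ?_ hint ?_
      · filter_upwards with ω using (Real.exp_pos _).le
      · filter_upwards [hnonneg i] with ω hω
        have h := aux_exp_le hp1.le hp2 (mul_nonneg hlam.le hω)
        rw [Real.mul_rpow hlam.le hω] at h
        simpa [neg_mul] using h
    have step2 : ∫ ω, (1 - lam * ζ i ω + lam ^ p * ζ i ω ^ p) ∂μ =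
        1 - lam * ∫ ω, ζ i ω ∂μ + lam ^ p * ∫ ω, ζ i ω ^ p ∂μ := by
      calc ∫ ω, (1 - lam * ζ i ω + lam ^ p * ζ i ω ^ p) ∂μ
          = (∫ ω, (1 - lam * ζ i ω) ∂μ) + ∫ ω, lam ^ p * ζ i ω ^ p ∂μ :=
            integral_add ((integrable_const 1).sub ((hζint i).const_mul lam))
              ((hζpint i).const_mul (lam ^ p))
        _ = ((∫ _ω, (1:ℝ) ∂μ) - ∫ ω, lam * ζ i ω ∂μ) + ∫ ω, lam ^ p * ζ i ω ^ p ∂μ := by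
            rw [integral_sub (integrable_const 1) ((hζint i).const_mul lam)]
        _ = 1 - lam * ∫ ω, ζ i ω ∂μ + lam ^ p * ∫ ω, ζ i ω ^ p ∂μ := by
            rw [integral_const_mul, integral_const_mul, integral_const]
            simp
    have step3 : 1 - lam * ∫ ω, ζ i ω ∂μ + lam ^ p * ∫ ω, ζ i ω ^ p ∂μ ≤
        Real.exp (-(lam * ∫ ω, ζ i ω ∂μ) + lam ^ p * ∫ ω, ζ i ω ^ p ∂μ) := by
      have := Real.add_one_le_exp (-(lam * ∫ ω, ζ i ω ∂μ) + lam ^ p * ∫ ω, ζ i ω ^ p ∂μ)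
      linarith
    calc mgf (ζ i) μ (-lam) ≤ _ := step1
      _ = _ := step2
      _ ≤ _ := step3
  -- integrability of exp(-lam * ζ i)
  have hexpint : ∀ i, Integrable (fun ω => Real.exp (-lam * ζ i ω)) μ := by
    intro i
    refine Integrable.mono' (integrable_const 1)
      (((hmeas i).const_mul (-lam)).exp.aestronglyMeasurable) ?_
    filter_upwards [hnonneg i] with ω hω
    rw [Real.norm_of_nonneg (Real.exp_pos _).le, Real.exp_le_one_iff]
    have hω' : (0:ℝ) ≤ ζ i ω := hω
    nlinarith [mul_nonneg hlam.le hω']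
  -- Chernoff bound for the sum
  have hsum_int : Integrable (fun ω => Real.exp (-lam * (∑ i, ζ i) ω)) μ :=
    hindep.integrable_exp_mul_sum hmeas fun i _ => hexpint i
  have hset : {ω | ∑ i, ζ i ω ≤ A - y} = {ω | (∑ i, ζ i) ω ≤ A - y} := by
    ext ω; simp [Finset.sum_apply]
  have hchern := measure_le_le_exp_mul_mgf (μ := μ) (X := ∑ i, ζ i) (A - y)
    (neg_nonpos_of_nonneg hlam.le) hsum_int
  rw [← hset, neg_neg] at hchern
  -- combine
  have hprod : mgf (∑ i, ζ i) μ (-lam) ≤ Real.exp (-(lam * A) + lam ^ p * B) := by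
    rw [hindep.mgf_sum hmeas]
    have h1 : ∏ i, mgf (ζ i) μ (-lam) ≤
        ∏ i, Real.exp (-(lam * ∫ ω, ζ i ω ∂μ) + lam ^ p * ∫ ω, ζ i ω ^ p ∂μ) :=
      Finset.prod_le_prod (fun i _ => mgf_nonneg) (fun i _ => hmgf i)
    refine h1.trans_eq ?_
    rw [← Real.exp_sum]
    congr 1
    rw [Finset.sum_add_distrib, Finset.sum_neg_distrib, ← Finset.mul_sum, ← Finset.mul_sum]
  have hmain : (μ {ω | ∑ i, ζ i ω ≤ A - y}).toReal ≤
      Real.exp (-(lam * y) + lam ^ p * B) := by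
    refine hchern.trans ?_
    calc Real.exp (lam * (A - y)) * mgf (∑ i, ζ i) μ (-lam)
        ≤ Real.exp (lam * (A - y)) * Real.exp (-(lam * A) + lam ^ p * B) := by
          gcongr
      _ = Real.exp (-(lam * y) + lam ^ p * B) := by
          rw [← Real.exp_add]; congr 1; ring
  refine hmain.trans ?_
  rw [Real.exp_le_exp]
  -- final computation
  have hlam_pow : lam ^ (p - 1) = y / (p * B) := by
    rw [hlam_def, ← Real.rpow_mul hx0.le, one_div, inv_mul_cancel₀ hq0.ne', Real.rpow_one]
  have h1 : lam ^ p = lam ^ (p - 1) * lam := by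
    nth_rewrite 1 [show p = (p - 1) + 1 from by ring]
    rw [Real.rpow_add hlam, Real.rpow_one]
  have hE1 : lam ^ p * B = lam * y / p := by
    rw [h1, hlam_pow]; field_simp
  set Yq := y ^ (p / (p - 1)) with hYq_def
  set Pq := p ^ (1 / (p - 1)) with hPq_def
  set Bq := B ^ (1 / (p - 1)) with hBq_def
  have hYq : 0 < Yq := Real.rpow_pos_of_pos hy0 _
  have hPq : 0 < Pq := Real.rpow_pos_of_pos hpp _
  have hBq : 0 < Bq := Real.rpow_pos_of_pos hBpos _
  have hE2 : lam * y = Yq / (Pq * Bq) := by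
    have hl : lam = y ^ (1 / (p - 1)) / (Pq * Bq) := by
      rw [hlam_def, Real.div_rpow hy0.le (mul_nonneg hpp.le hBpos.le),
        Real.mul_rpow hpp.le hBpos.le]
    have hyq : Yq = y ^ (1 / (p - 1)) * y := by
      rw [hYq_def, show p / (p - 1) = 1 / (p - 1) + 1 from by field_simp; ring,
        Real.rpow_add hy0, Real.rpow_one]
    rw [hl, hyq]; ring
  have hpq : p * Pq ≤ 4 := by
    have : p ^ (p / (p - 1)) = p * Pq := by
      rw [hPq_def, show p / (p - 1) = 1 + 1 / (p - 1) from by field_simp; ring,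
        Real.rpow_add hpp, Real.rpow_one]
    rw [← this]
    exact aux_p_rpow_le_four hp1 hp2
  rw [hE1, hE2]
  have h7 : ((p - 1) / 4) * (Yq / Bq) ≤ ((p - 1) / p) * (Yq / (Pq * Bq)) := by
    rw [div_mul_div_comm, div_mul_div_comm,
      div_le_div_iff₀ (by positivity) (by positivity)]
    have haY : 0 ≤ (p - 1) * Yq := mul_nonneg hq0.le hYq.le
    nlinarith [mul_le_mul_of_nonneg_left
      (mul_le_mul_of_nonneg_right hpq hBq.le) haY]
  have h8 : -(Yq / (Pq * Bq)) + Yq / (Pq * Bq) / p = -((p - 1) / p) * (Yq / (Pq * Bq)) := by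
    field_simp; ring
  linarith [h7, h8]
end

section
/- Let $\Phi$ denote the standard normal distribution function. Then $\max_{0 \le x \le n} \Big| \frac{1-\Phi(x)}{1-\Phi(x + n^{-2})} - 1 \Big| = O(n^{-1})$ as $n \to \infty$; that is, there exist constants $C$ and $N$ such that for all $n \ge N$ and all $x \in [0,n]$, $\big| \frac{1-\Phi(x)}{1-\Phi(x+n^{-2})} - 1 \big| \le C/n$. -/
open MeasureTheory ProbabilityTheory

/-- The standard normal cumulative distribution function. -/
noncomputable def stdNormalCDF (x : ℝ) : ℝ :=
  ((gaussianReal 0 1) (Set.Iic x)).toReal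

namespace GaussTailAux

noncomputable def g : ℝ → ℝ := gaussianPDFReal 0 1

lemma g_nonneg (t : ℝ) : 0 ≤ g t := gaussianPDFReal_nonneg 0 1 t

lemma g_pos (t : ℝ) : 0 < g t := gaussianPDFReal_pos 0 1 t one_ne_zero

lemma g_integrable : MeasureTheory.Integrable g := integrable_gaussianPDFReal 0 1

lemma g_anti {a b : ℝ} (ha : 0 ≤ a) (hab : a ≤ b) : g b ≤ g a := by
  unfold g gaussianPDFReal
  apply mul_le_mul_of_nonneg_left _ (by positivity)
  rw [Real.exp_le_exp]
  push_cast
  nlinarith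

lemma cdf_eq (z : ℝ) : stdNormalCDF z = ∫ t in Set.Iic z, g t := by
  unfold stdNormalCDF
  rw [gaussianReal_apply_eq_integral 0 one_ne_zero, ENNReal.toReal_ofReal]
  · rfl
  · exact setIntegral_nonneg measurableSet_Iic fun t _ => gaussianPDFReal_nonneg 0 1 t

lemma tail_eq (z : ℝ) : 1 - stdNormalCDF z = ∫ t in Set.Ioi z, g t := by
  have h := intervalIntegral.integral_Iic_add_Ioi (b := z)
    (g_integrable.integrableOn) (g_integrable.integrableOn)
  have h1 : ∫ t, g t = 1 := integral_gaussianPDFReal_eq_one 0 one_ne_zero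
  rw [cdf_eq]
  linarith [h, h1]

lemma diff_eq {a b : ℝ} (hab : a ≤ b) :
    stdNormalCDF b - stdNormalCDF a = ∫ t in Set.Ioc a b, g t := by
  rw [cdf_eq, cdf_eq,
    intervalIntegral.integral_Iic_sub_Iic (g_integrable.integrableOn) (g_integrable.integrableOn),
    intervalIntegral.integral_of_le hab]

lemma diff_le {a b : ℝ} (ha : 0 ≤ a) (hab : a ≤ b) :
    ∫ t in Set.Ioc a b, g t ≤ (b - a) * g a := by
  have h1 : ∫ t in Set.Ioc a b, g t ≤ ∫ _t in Set.Ioc a b, g a := by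
    refine setIntegral_mono_on (g_integrable.integrableOn)
      (integrableOn_const (hs := measure_Ioc_lt_top.ne)) measurableSet_Ioc ?_
    exact fun t ht => g_anti ha ht.1.le
  calc ∫ t in Set.Ioc a b, g t ≤ ∫ _t in Set.Ioc a b, g a := h1
    _ = (b - a) * g a := by
        rw [setIntegral_const, measureReal_def, Real.volume_Ioc, ENNReal.toReal_ofReal (by linarith)]
        rfl

lemma tail_ge {y δ : ℝ} (hy : 0 ≤ y) (hδ : 0 < δ) :
    δ * g (y + δ) ≤ ∫ t in Set.Ioi y, g t := by
  have h0 : ∫ t in Set.Ioc y (y + δ), g t ≤ ∫ t in Set.Ioi y, g t := by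
    refine setIntegral_mono_set (g_integrable.integrableOn)
      (Filter.Eventually.of_forall fun t => g_nonneg t) ?_
    exact Filter.Eventually.of_forall (Set.Ioc_subset_Ioi_self)
  have h1 : ∫ _t in Set.Ioc y (y + δ), g (y + δ) ≤ ∫ t in Set.Ioc y (y + δ), g t := by
    refine setIntegral_mono_on (integrableOn_const (hs := measure_Ioc_lt_top.ne))
      (g_integrable.integrableOn) measurableSet_Ioc ?_
    exact fun t ht => g_anti (le_trans hy ht.1.le) ht.2
  have h2 : ∫ _t in Set.Ioc y (y + δ), g (y + δ) = δ * g (y + δ) := by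
    rw [setIntegral_const, measureReal_def, Real.volume_Ioc, ENNReal.toReal_ofReal (by linarith)]
    simp
  linarith

lemma g_ratio {a b : ℝ} (h : a ^ 2 - b ^ 2 ≤ 16) : g b ≤ Real.exp 8 * g a := by
  unfold g gaussianPDFReal
  rw [mul_left_comm]
  apply mul_le_mul_of_nonneg_left _ (by positivity)
  rw [← Real.exp_add, Real.exp_le_exp]
  push_cast
  nlinarith

end GaussTailAux

/-- Stability of Gaussian tails under perturbation `+n⁻²`:
`max_{0 ≤ x ≤ n} |(1-Φ(x))/(1-Φ(x+n⁻²)) - 1| = O(n⁻¹)`. -/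
theorem gaussian_tail_stability_plus :
    ∃ (C : ℝ) (N : ℕ), ∀ n : ℕ, N ≤ n → ∀ x : ℝ, 0 ≤ x → x ≤ n →
      |(1 - stdNormalCDF x) / (1 - stdNormalCDF (x + ((n : ℝ) ^ 2)⁻¹)) - 1| ≤ C / n := by
  open GaussTailAux in
  refine ⟨2 * Real.exp 8, 1, fun n hn x hx hxn => ?_⟩
  have hn1 : (1 : ℝ) ≤ n := by exact_mod_cast hn
  have hnpos : (0 : ℝ) < n := by linarith
  set ε : ℝ := ((n : ℝ) ^ 2)⁻¹ with hε
  have hεpos : 0 < ε := by positivity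
  have hε1 : ε ≤ 1 := by
    rw [hε]; rw [inv_le_one_iff₀]; right; nlinarith
  set y : ℝ := x + ε with hy
  set δ : ℝ := ((n : ℝ) + 1)⁻¹ with hδ
  have hδpos : 0 < δ := by positivity
  have hδ1 : δ ≤ 1 := by
    rw [hδ, inv_le_one_iff₀]; right; linarith
  have hxy : x ≤ y := by simp [hy, hεpos.le]
  have hy0 : 0 ≤ y := le_trans hx hxy
  -- denominator
  have hden : 1 - stdNormalCDF y = ∫ t in Set.Ioi y, g t := tail_eq y
  have hdenge : δ * g (y + δ) ≤ 1 - stdNormalCDF y := by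
    rw [hden]; exact tail_ge hy0 hδpos
  have hgyδ : 0 < g (y + δ) := g_pos _
  have hdenpos : 0 < 1 - stdNormalCDF y :=
    lt_of_lt_of_le (mul_pos hδpos hgyδ) hdenge
  -- numerator
  have hnum : stdNormalCDF y - stdNormalCDF x = ∫ t in Set.Ioc x y, g t := diff_eq hxy
  have hnumle : stdNormalCDF y - stdNormalCDF x ≤ ε * g x := by
    rw [hnum]
    have := diff_le hx hxy
    simpa [hy] using this
  have hnumnonneg : 0 ≤ stdNormalCDF y - stdNormalCDF x := by
    rw [hnum]
    exact setIntegral_nonneg measurableSet_Ioc fun t _ => g_nonneg t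
  -- ratio rewrite
  have hratio : (1 - stdNormalCDF x) / (1 - stdNormalCDF y) - 1
      = (stdNormalCDF y - stdNormalCDF x) / (1 - stdNormalCDF y) := by
    field_simp
    ring
  rw [hratio, abs_of_nonneg (div_nonneg hnumnonneg hdenpos.le)]
  -- exponent bound : (y+δ)^2 - x^2 ≤ 16
  have hεx : ε * x ≤ 1 := by
    have : x ≤ (n : ℝ) ^ 2 := by nlinarith
    rw [hε]
    rw [inv_mul_le_iff₀ (by positivity)]
    linarith
  have hδx : δ * x ≤ 1 := by
    rw [hδ, inv_mul_le_iff₀ (by positivity)]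
    linarith
  have hexp : (y + δ) ^ 2 - x ^ 2 ≤ 16 := by
    have : y + δ = x + (ε + δ) := by rw [hy]; ring
    rw [this]
    nlinarith [hεpos.le, hδpos.le]
  have hgx : g x ≤ Real.exp 8 * g (y + δ) := g_ratio hexp
  -- combine
  have key : (stdNormalCDF y - stdNormalCDF x) / (1 - stdNormalCDF y)
      ≤ ε * (Real.exp 8 * g (y + δ)) / (δ * g (y + δ)) := by
    apply div_le_div₀ (by positivity) _ (mul_pos hδpos hgyδ) hdenge
    calc stdNormalCDF y - stdNormalCDF x ≤ ε * g x := hnumle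
      _ ≤ ε * (Real.exp 8 * g (y + δ)) := by
          exact mul_le_mul_of_nonneg_left hgx hεpos.le
  have hsimp : ε * (Real.exp 8 * g (y + δ)) / (δ * g (y + δ)) = Real.exp 8 * (ε / δ) := by
    rw [div_eq_iff (mul_pos hδpos hgyδ).ne']
    field_simp
  rw [hsimp] at key
  refine le_trans key ?_
  -- exp 8 * (ε/δ) ≤ 2 * exp 8 / n
  have hεδ : ε / δ ≤ 2 / n := by
    have h1 : ε / δ = ((n : ℝ) + 1) / (n : ℝ) ^ 2 := by
      rw [hε, hδ]; field_simp
    rw [h1, div_le_div_iff₀ (by positivity) hnpos]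
    nlinarith
  calc Real.exp 8 * (ε / δ) ≤ Real.exp 8 * (2 / n) :=
        mul_le_mul_of_nonneg_left hεδ (Real.exp_nonneg 8)
    _ = 2 * Real.exp 8 / n := by ring
end

section
/- Let $\Phi$ denote the standard normal distribution function. Then $\max_{0 \le x \le n} \Big| \frac{1-\Phi(x)}{1-\Phi(x - n^{-2})} - 1 \Big| = O(n^{-1})$ as $n \to \infty$. -/
open MeasureTheory ProbabilityTheory

private lemma stdNormalCDF_eq (x : ℝ) :
    stdNormalCDF x = ∫ t in Set.Iic x, gaussianPDFReal 0 1 t := by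
  rw [stdNormalCDF, gaussianReal_apply_eq_integral 0 one_ne_zero,
    ENNReal.toReal_ofReal
      (setIntegral_nonneg measurableSet_Iic fun t _ => gaussianPDFReal_nonneg 0 1 t)]

private lemma tail_eq (x : ℝ) :
    1 - stdNormalCDF x = ∫ t in Set.Ioi x, gaussianPDFReal 0 1 t := by
  have h := intervalIntegral.integral_Iic_add_Ioi (b := x)
    (integrable_gaussianPDFReal 0 1).integrableOn
    (integrable_gaussianPDFReal 0 1).integrableOn
  rw [integral_gaussianPDFReal_eq_one 0 one_ne_zero] at h
  rw [stdNormalCDF_eq]; linarith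

private lemma pdf_le {s t c : ℝ} (h : t ^ 2 - s ^ 2 ≤ 2 * c) :
    gaussianPDFReal 0 1 s ≤ Real.exp c * gaussianPDFReal 0 1 t := by
  simp only [gaussianPDFReal, sub_zero, NNReal.coe_one, mul_one]
  rw [← mul_assoc, mul_comm (Real.exp c), mul_assoc]
  gcongr _ * ?_
  rw [← Real.exp_add, Real.exp_le_exp]
  linarith


private lemma diff_eq {a b : ℝ} (hab : a ≤ b) :
    stdNormalCDF b - stdNormalCDF a = ∫ t in Set.Ioc a b, gaussianPDFReal 0 1 t := by
  have h := setIntegral_union (f := gaussianPDFReal 0 1) (μ := volume)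
    (s := Set.Ioc a b) (t := Set.Ioi b)
    (Set.Ioc_disjoint_Ioi le_rfl) measurableSet_Ioi
    (integrable_gaussianPDFReal 0 1).integrableOn
    (integrable_gaussianPDFReal 0 1).integrableOn
  rw [Set.Ioc_union_Ioi_eq_Ioi hab] at h
  have ha := tail_eq a
  have hb := tail_eq b
  linarith

private lemma integral_Ioc_le {a b M : ℝ} (hab : a ≤ b)
    (hM : ∀ t ∈ Set.Ioc a b, gaussianPDFReal 0 1 t ≤ M) :
    ∫ t in Set.Ioc a b, gaussianPDFReal 0 1 t ≤ (b - a) * M := by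
  have h := setIntegral_mono_on (μ := volume) (g := fun _ => M)
    (integrable_gaussianPDFReal 0 1).integrableOn
    ((integrableOn_const_iff).mpr (Or.inr (by rw [Real.volume_Ioc]; exact ENNReal.ofReal_lt_top)))
    measurableSet_Ioc hM
  rwa [setIntegral_const, Real.volume_real_Ioc_of_le hab, smul_eq_mul] at h

private lemma integral_Ioc_ge {a b m : ℝ} (hab : a ≤ b)
    (hm : ∀ t ∈ Set.Ioc a b, m ≤ gaussianPDFReal 0 1 t) :
    (b - a) * m ≤ ∫ t in Set.Ioc a b, gaussianPDFReal 0 1 t := by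
  have h := setIntegral_mono_on (μ := volume) (f := fun _ => m)
    ((integrableOn_const_iff).mpr (Or.inr (by rw [Real.volume_Ioc]; exact ENNReal.ofReal_lt_top)))
    (integrable_gaussianPDFReal 0 1).integrableOn
    measurableSet_Ioc hm
  rwa [setIntegral_const, Real.volume_real_Ioc_of_le hab, smul_eq_mul] at h

private lemma tail_ge {x : ℝ} (hx : 0 ≤ x) :
    (x + 1)⁻¹ * (Real.exp (-2) * gaussianPDFReal 0 1 x) ≤ 1 - stdNormalCDF x := by
  set δ : ℝ := (x + 1)⁻¹ with hδ
  have hδ0 : 0 < δ := by positivity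
  have hδ1 : δ ≤ 1 := by rw [hδ]; rw [inv_le_one_iff₀]; right; linarith
  have hδx : x * δ ≤ 1 := by
    have : (x + 1) * δ = 1 := mul_inv_cancel₀ (by positivity)
    nlinarith
  have h1 : ∫ t in Set.Ioc x (x + δ), gaussianPDFReal 0 1 t ≤ 1 - stdNormalCDF x := by
    rw [tail_eq]
    refine setIntegral_mono_set (integrable_gaussianPDFReal 0 1).integrableOn
      (ae_of_all _ fun t => gaussianPDFReal_nonneg 0 1 t) (ae_of_all _ ?_)
    exact fun t ht => ht.1
  refine le_trans ?_ h1
  have h2 := integral_Ioc_ge (a := x) (b := x + δ)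
    (m := Real.exp (-2) * gaussianPDFReal 0 1 x) (by linarith) ?_
  · calc δ * (Real.exp (-2) * gaussianPDFReal 0 1 x)
        = (x + δ - x) * (Real.exp (-2) * gaussianPDFReal 0 1 x) := by ring_nf
      _ ≤ _ := h2
  · intro t ht
    have h3 : gaussianPDFReal 0 1 x ≤ Real.exp 2 * gaussianPDFReal 0 1 t := by
      refine pdf_le ?_
      have ht1 : x ≤ t := le_of_lt ht.1
      have ht2 : t ≤ x + δ := ht.2
      nlinarith [sq_nonneg δ]
    have hE : (0:ℝ) < Real.exp (-2) := Real.exp_pos _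
    have := mul_le_mul_of_nonneg_left h3 hE.le
    rwa [← mul_assoc, ← Real.exp_add, neg_add_cancel, Real.exp_zero, one_mul] at this


/-- Stability of Gaussian tails under perturbation `-n⁻²`:
`max_{0 ≤ x ≤ n} |(1-Φ(x))/(1-Φ(x-n⁻²)) - 1| = O(n⁻¹)`. -/
theorem gaussian_tail_stability_minus :
    ∃ (C : ℝ) (N : ℕ), ∀ n : ℕ, N ≤ n → ∀ x : ℝ, 0 ≤ x → x ≤ n →
      |(1 - stdNormalCDF x) / (1 - stdNormalCDF (x - ((n : ℝ) ^ 2)⁻¹)) - 1| ≤ C / n := by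
  refine ⟨2 * Real.exp 3, 1, fun n hn x hx hxn => ?_⟩
  have hn1 : (1:ℝ) ≤ n := by exact_mod_cast hn
  have hn0 : (0:ℝ) < n := by linarith
  set ε : ℝ := ((n : ℝ) ^ 2)⁻¹ with hεdef
  have hε0 : 0 < ε := by positivity
  have hεsq : ε * (n:ℝ) ^ 2 = 1 := inv_mul_cancel₀ (by positivity)
  have hn2 : (1:ℝ) ≤ (n:ℝ)^2 := by nlinarith
  have hε1 : ε ≤ 1 := by nlinarith [mul_le_mul_of_nonneg_left hn2 hε0.le]
  have hεx : ε * x ≤ 1 := by nlinarith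
  have hφpos : 0 < gaussianPDFReal 0 1 x := gaussianPDFReal_pos 0 1 x one_ne_zero
  set φx : ℝ := gaussianPDFReal 0 1 x with hφx
  -- numerator
  have hNm : stdNormalCDF x - stdNormalCDF (x - ε)
      = ∫ t in Set.Ioc (x - ε) x, gaussianPDFReal 0 1 t := diff_eq (by linarith)
  have hNm_nonneg : 0 ≤ stdNormalCDF x - stdNormalCDF (x - ε) := by
    rw [hNm]
    exact setIntegral_nonneg measurableSet_Ioc fun t _ => gaussianPDFReal_nonneg 0 1 t
  have hNm_le : stdNormalCDF x - stdNormalCDF (x - ε) ≤ ε * (Real.exp 1 * φx) := by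
    rw [hNm]
    have h := integral_Ioc_le (a := x - ε) (b := x) (M := Real.exp 1 * φx) (by linarith) ?_
    · calc ∫ t in Set.Ioc (x - ε) x, gaussianPDFReal 0 1 t
          ≤ (x - (x - ε)) * (Real.exp 1 * φx) := h
        _ = ε * (Real.exp 1 * φx) := by ring_nf
    · intro t ht
      refine pdf_le ?_
      rcases le_or_gt 0 t with h0 | h0
      · nlinarith [ht.1, ht.2]
      · have : x < ε := by nlinarith [ht.1]
        nlinarith [sq_nonneg t]
  -- denominator
  have htail := tail_ge hx
  have hmono : 1 - stdNormalCDF x ≤ 1 - stdNormalCDF (x - ε) := by linarith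
  have hD_ge : (x + 1)⁻¹ * (Real.exp (-2) * φx) ≤ 1 - stdNormalCDF (x - ε) := by
    rw [hφx]; linarith
  have hD_pos : 0 < 1 - stdNormalCDF (x - ε) :=
    lt_of_lt_of_le (by positivity) hD_ge
  -- arithmetic
  have hrw : (1 - stdNormalCDF x) / (1 - stdNormalCDF (x - ε)) - 1
      = ((1 - stdNormalCDF x) - (1 - stdNormalCDF (x - ε))) / (1 - stdNormalCDF (x - ε)) := by
    field_simp
  rw [hrw, abs_div, abs_of_pos hD_pos, abs_of_nonpos (by linarith),
    div_le_div_iff₀ hD_pos hn0]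
  have hx1 : 0 < x + 1 := by linarith
  have hδeq : (x + 1) * (x + 1)⁻¹ = 1 := mul_inv_cancel₀ (by positivity)
  have hE : Real.exp 3 * Real.exp (-2) = Real.exp 1 := by
    rw [← Real.exp_add]; norm_num
  have key : (stdNormalCDF x - stdNormalCDF (x - ε)) * (n:ℝ)
      ≤ 2 * Real.exp 3 * (1 - stdNormalCDF (x - ε)) := by
    calc (stdNormalCDF x - stdNormalCDF (x - ε)) * (n:ℝ)
        ≤ (ε * (Real.exp 1 * φx)) * (n:ℝ) := by
          exact mul_le_mul_of_nonneg_right hNm_le hn0.le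
      _ ≤ 2 * Real.exp 3 * ((x + 1)⁻¹ * (Real.exp (-2) * φx)) := by
          rw [← hE]
          have hEp := Real.exp_pos 3
          have hE2 := Real.exp_pos (-2)
          have hεn : ε * (n:ℝ) * (x + 1) ≤ 2 := by nlinarith
          nlinarith [mul_pos (mul_pos hEp hE2) hφpos,
            mul_pos (mul_pos hε0 hn0) hx1, inv_pos.mpr hx1,
            mul_le_mul_of_nonneg_right hεn
              (le_of_lt (mul_pos (mul_pos (mul_pos hEp hE2) hφpos) (inv_pos.mpr hx1)))]
      _ ≤ 2 * Real.exp 3 * (1 - stdNormalCDF (x - ε)) := by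
          have : (0:ℝ) < 2 * Real.exp 3 := by positivity
          exact mul_le_mul_of_nonneg_left hD_ge this.le
  calc -((1 - stdNormalCDF x) - (1 - stdNormalCDF (x - ε))) * (n:ℝ)
      = (stdNormalCDF x - stdNormalCDF (x - ε)) * (n:ℝ) := by ring
    _ ≤ 2 * Real.exp 3 * (1 - stdNormalCDF (x - ε)) := key
end
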